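/- Let u : ℝ → ℝ be a convex function, let 0 be a differentiability point of u, and suppose u is differentiable at x > 0. Write u'' = μ + Σₙ aₙ δ_{qₙ} with μ non-atomic. Then the Lebesgue measure of the image u'([0,x]) (the set of derivative values attained at differentiability points of [0,x]) equals μ([0,x]). -/

import Mathlib

open MeasureTheory Filter Function
open scoped Topology

section aux

variable {u : ℝ → ℝ} {g : StieltjesFunction ℝ}

/-- The right derivative is at most the forward slope. -/
lemma aux_le_slope (hu : ConvexOn ℝ Set.univ u)
    (hg : ∀ y, HasDerivWithinAt u (g y) (Set.Ioi y) y)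
    {y z : ℝ} (hyz : y < z) : g y ≤ slope u y z := by
  have ht : Tendsto (slope u y) (𝓝[>] y) (𝓝 (g y)) := by
    have := hasDerivWithinAt_iff_tendsto_slope.1 (hg y)
    rwa [Set.diff_singleton_eq_self (by simp)] at this
  refine le_of_tendsto ht ?_
  filter_upwards [Ioo_mem_nhdsGT_of_mem ⟨le_rfl, hyz⟩] with t ht
  have h := hu.secant_mono (Set.mem_univ y) (Set.mem_univ t) (Set.mem_univ z)
      (ne_of_gt ht.1) (ne_of_gt (ht.1.trans ht.2)) ht.2.le
  rw [slope_def_field, slope_def_field]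
  exact h

/-- The forward slope is at most the right derivative at the right endpoint. -/
lemma aux_slope_le (hu : ConvexOn ℝ Set.univ u)
    (hg : ∀ y, HasDerivWithinAt u (g y) (Set.Ioi y) y)
    {y z : ℝ} (hyz : y < z) : slope u y z ≤ g z := by
  have ht : Tendsto (slope u z) (𝓝[>] z) (𝓝 (g z)) := by
    have := hasDerivWithinAt_iff_tendsto_slope.1 (hg z)
    rwa [Set.diff_singleton_eq_self (by simp)] at this
  refine ge_of_tendsto ht ?_
  filter_upwards [self_mem_nhdsWithin] with t htz
  have h := hu.slope_mono_adjacent (Set.mem_univ y) (Set.mem_univ t) hyz htz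
  rw [slope_def_field, slope_def_field]
  exact h

/-- At a differentiability point, the derivative equals the right derivative. -/
lemma aux_deriv_eq (hg : ∀ y, HasDerivWithinAt u (g y) (Set.Ioi y) y)
    {y : ℝ} (hy : DifferentiableAt ℝ u y) : deriv u y = g y := by
  have h1 : HasDerivWithinAt u (deriv u y) (Set.Ioi y) y := hy.hasDerivAt.hasDerivWithinAt
  have h2 := (hg y).derivWithin (uniqueDiffWithinAt_Ioi y)
  rw [← h2, ← h1.derivWithin (uniqueDiffWithinAt_Ioi y)]

/-- At a differentiability point, `g` is left continuous. -/
lemma aux_leftLim_eq (hu : ConvexOn ℝ Set.univ u)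
    (hg : ∀ y, HasDerivWithinAt u (g y) (Set.Ioi y) y)
    {y : ℝ} (hy : DifferentiableAt ℝ u y) : leftLim g y = g y := by
  have hd : HasDerivAt u (g y) y := aux_deriv_eq hg hy ▸ hy.hasDerivAt
  have hts : Tendsto (slope u y) (𝓝[<] y) (𝓝 (g y)) :=
    (hasDerivAt_iff_tendsto_slope.1 hd).mono_left
      (nhdsWithin_mono y fun s hs => ne_of_lt hs)
  refine le_antisymm (g.mono.leftLim_le le_rfl) ?_
  have key : ∀ s' < y, slope u s' y ≤ leftLim g y := by
    intro s' hs'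
    have hc : ContinuousAt (fun s => slope u s' s) y := by
      simp only [slope_def_field]
      exact ((hy.continuousAt.sub continuousAt_const).div
        (continuousAt_id.sub continuousAt_const) (sub_ne_zero.2 (ne_of_gt hs')))
    have hcont : Tendsto (fun s => slope u s' s) (𝓝[<] y) (𝓝 (slope u s' y)) :=
      hc.continuousWithinAt.tendsto
    refine le_of_tendsto_of_tendsto hcont (g.mono.tendsto_leftLim y) ?_
    filter_upwards [Ioo_mem_nhdsLT_of_mem ⟨hs', le_rfl⟩] with s hs
    exact aux_slope_le hu hg hs.1
  have hts' : Tendsto (fun s' => slope u s' y) (𝓝[<] y) (𝓝 (g y)) := by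
    have : (fun s' => slope u s' y) = slope u y := by
      funext s'; exact slope_comm u s' y
    rw [this]; exact hts
  refine le_of_tendsto hts' ?_
  filter_upwards [self_mem_nhdsWithin] with s' hs'
  exact key s' hs'

/-- If `g` is left continuous at `y` then `u` is differentiable at `y`. -/
lemma aux_hasDerivAt (hu : ConvexOn ℝ Set.univ u)
    (hg : ∀ y, HasDerivWithinAt u (g y) (Set.Ioi y) y)
    {y : ℝ} (h : leftLim g y = g y) : HasDerivAt u (g y) y := by
  rw [hasDerivAt_iff_tendsto_slope, ← nhdsLT_sup_nhdsGT, tendsto_sup]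
  constructor
  · have h1 : Tendsto (fun s => g s) (𝓝[<] y) (𝓝 (g y)) := h ▸ g.mono.tendsto_leftLim y
    refine tendsto_of_tendsto_of_tendsto_of_le_of_le' h1 tendsto_const_nhds ?_ ?_
    · filter_upwards [self_mem_nhdsWithin] with s hs
      rw [slope_comm]
      exact aux_le_slope hu hg hs
    · filter_upwards [self_mem_nhdsWithin] with s hs
      rw [slope_comm]
      exact aux_slope_le hu hg hs
  · have := hasDerivWithinAt_iff_tendsto_slope.1 (hg y)
    rwa [Set.diff_singleton_eq_self (by simp)] at this

end aux

/-- Let `u : ℝ → ℝ` be convex with right derivative the Stieltjes function `g`,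
differentiable at `0` and at `x > 0`. Decompose the second derivative measure
`g.measure = μ + νa` with `μ` non-atomic and `νa` purely atomic. Then the Lebesgue
measure of the set of derivative values attained at differentiability points of `[0,x]`
equals `μ([0,x])`. -/
theorem stmt4 (u : ℝ → ℝ) (g : StieltjesFunction ℝ) (x : ℝ)
    (μ νa : Measure ℝ)
    (hu : ConvexOn ℝ Set.univ u)
    (hg : ∀ y, HasDerivWithinAt u (g y) (Set.Ioi y) y)
    (hx : 0 < x)
    (h0 : DifferentiableAt ℝ u 0) (hxd : DifferentiableAt ℝ u x)
    (hdecomp : g.measure = μ + νa)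
    (hμ : ∀ y : ℝ, μ {y} = 0)
    (hνa : ∃ S : Set ℝ, S.Countable ∧ νa Sᶜ = 0) :
    volume (deriv u '' {y ∈ Set.Icc 0 x | DifferentiableAt ℝ u y}) = μ (Set.Icc 0 x) := by
  obtain ⟨S, hScount, hSnull⟩ := hνa
  set D := {y ∈ Set.Icc 0 x | DifferentiableAt ℝ u y} with hD
  set T := S ∩ Set.Icc 0 x with hT
  have hTcount : T.Countable := hScount.mono Set.inter_subset_left
  set U := ⋃ q ∈ T, Set.Ioo (leftLim g q) (g q) with hU
  set N := ⋃ q ∈ T, ({leftLim g q, g q} : Set ℝ) with hN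
  set C := Set.Icc (g 0) (g x) \ U with hC
  have h00 : leftLim g 0 = g 0 := aux_leftLim_eq hu hg h0
  have hxx : leftLim g x = g x := aux_leftLim_eq hu hg hxd
  -- every jump point of `g` belongs to `S`
  have hjump : ∀ q : ℝ, leftLim g q < g q → q ∈ S := by
    intro q hq
    by_contra hqS
    have h1 : νa {q} = 0 :=
      le_antisymm ((measure_mono (by simpa using hqS)).trans hSnull.le) zero_le
    have h2 : g.measure {q} = 0 := by
      rw [hdecomp, Measure.add_apply, h1, hμ q, add_zero]
    rw [g.measure_singleton, ENNReal.ofReal_eq_zero] at h2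
    exact absurd h2 (not_le.2 (sub_pos.2 hq))
  -- step 1 : image is contained in C
  have hAC : deriv u '' D ⊆ C := by
    rintro _ ⟨y, ⟨hyIcc, hyD⟩, rfl⟩
    rw [aux_deriv_eq hg hyD]
    refine ⟨⟨g.mono hyIcc.1, g.mono hyIcc.2⟩, ?_⟩
    intro hmem
    rw [hU, Set.mem_iUnion₂] at hmem
    obtain ⟨q, hqT, h1, h2⟩ := hmem
    rcases lt_or_ge y q with h | h
    · exact absurd (g.mono.le_leftLim h) (not_le.2 h1)
    · exact absurd (g.mono h) (not_le.2 h2)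
  -- step 2 : C minus a countable set is contained in the image
  have hBA : C \ N ⊆ deriv u '' D := by
    rintro v ⟨⟨hvIcc, hvU⟩, hvN⟩
    have hstar : ∀ q ∈ Set.Icc (0:ℝ) x, leftLim g q < g q →
        v ∉ Set.Icc (leftLim g q) (g q) := by
      intro q hq hlt hvmem
      have hqT : q ∈ T := ⟨hjump q hlt, hq⟩
      rcases eq_or_lt_of_le hvmem.1 with h | h
      · exact hvN (Set.mem_biUnion hqT (by simp [← h]))
      rcases eq_or_lt_of_le hvmem.2 with h' | h'
      · exact hvN (Set.mem_biUnion hqT (by simp [h']))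
      · exact hvU (Set.mem_biUnion hqT ⟨h, h'⟩)
    set E := {t : ℝ | t ∈ Set.Icc 0 x ∧ g t ≤ v} with hE
    have hE0 : (0:ℝ) ∈ E := ⟨⟨le_rfl, hx.le⟩, hvIcc.1⟩
    have hEne : E.Nonempty := ⟨0, hE0⟩
    have hEbdd : BddAbove E := ⟨x, fun t ht => ht.1.2⟩
    set y := sSup E with hy
    have hy0 : 0 ≤ y := le_csSup hEbdd hE0
    have hyx : y ≤ x := csSup_le hEne fun t ht => ht.1.2
    have hgt : ∀ t, y < t → t ≤ x → v < g t := by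
      intro t h1 h2
      by_contra hc
      exact absurd (le_csSup hEbdd ⟨⟨hy0.trans h1.le, h2⟩, not_lt.1 hc⟩) (not_le.2 h1)
    have hll : leftLim g y ≤ v := by
      rcases eq_or_lt_of_le hy0 with h | h
      · rw [← h, h00]; exact hvIcc.1
      · refine le_of_tendsto (g.mono.tendsto_leftLim y) ?_
        filter_upwards [self_mem_nhdsWithin] with s hs
        obtain ⟨t, htE, hst⟩ := exists_lt_of_lt_csSup hEne hs
        exact (g.mono hst.le).trans htE.2
    have hvy : v ≤ g y := by
      rcases eq_or_lt_of_le hyx with h | h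
      · rw [h]; exact hvIcc.2
      · have htd : Tendsto g (𝓝[>] y) (𝓝 (g y)) :=
          (g.right_continuous y).tendsto.mono_left
            (nhdsWithin_mono _ Set.Ioi_subset_Ici_self)
        refine ge_of_tendsto htd ?_
        filter_upwards [Ioo_mem_nhdsGT_of_mem ⟨le_rfl, h⟩] with t ht
        exact (hgt t ht.1 ht.2.le).le
    have heq : leftLim g y = g y := by
      by_contra hne
      exact hstar y ⟨hy0, hyx⟩ (lt_of_le_of_ne (g.mono.leftLim_le le_rfl) hne) ⟨hll, hvy⟩
    have hgyv : g y = v := le_antisymm (heq ▸ hll) hvy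
    have hder := aux_hasDerivAt hu hg heq
    exact ⟨y, ⟨⟨hy0, hyx⟩, hder.differentiableAt⟩, by rw [hder.deriv, hgyv]⟩
  -- step 3 : N is null
  have hNnull : volume N = 0 :=
    (hTcount.biUnion fun q _ =>
      ((Set.finite_singleton _).insert _).countable).measure_zero _
  -- step 4 : the image has the same volume as C
  have hvolA : volume (deriv u '' D) = volume C := by
    refine le_antisymm (measure_mono hAC) ?_
    calc volume C = volume (C \ N) := (measure_diff_null hNnull).symm
      _ ≤ volume (deriv u '' D) := measure_mono hBA
  -- step 5 : compute the volume of C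
  have hdisj : T.PairwiseDisjoint fun q => Set.Ioo (leftLim g q) (g q) := by
    have key : ∀ p q : ℝ, p < q →
        Disjoint (Set.Ioo (leftLim g p) (g p)) (Set.Ioo (leftLim g q) (g q)) := by
      intro p q hlt
      refine Set.disjoint_left.2 fun v hvp hvq => ?_
      exact absurd ((hvp.2.trans_le (g.mono.le_leftLim hlt)).trans hvq.1) (lt_irrefl v)
    intro p _ q _ hpq
    rcases hpq.lt_or_gt with h | h
    · exact key p q h
    · exact (key q p h).symm
  have hUIcc : U ⊆ Set.Icc (g 0) (g x) := by
    rw [hU, Set.iUnion₂_subset_iff]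
    intro q hqT v hv
    refine ⟨?_, hv.2.le.trans (g.mono hqT.2.2)⟩
    calc g 0 = leftLim g 0 := h00.symm
      _ ≤ leftLim g q := g.mono.leftLim hqT.2.1
      _ ≤ v := hv.1.le
  have hUmeas : MeasurableSet U :=
    MeasurableSet.biUnion hTcount fun q _ => measurableSet_Ioo
  have hνaT : νa T = νa (Set.Icc 0 x) := by
    have h1 := measure_inter_add_diff (μ := νa) (Set.Icc (0:ℝ) x) hScount.measurableSet
    have h2 : νa (Set.Icc 0 x \ S) = 0 :=
      le_antisymm ((measure_mono (Set.diff_subset_compl _ _)).trans hSnull.le) zero_le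
    rw [h2, add_zero] at h1
    rw [hT, Set.inter_comm, h1]
  have hvolU : volume U = νa (Set.Icc 0 x) := by
    rw [hU, measure_biUnion hTcount hdisj fun q _ => measurableSet_Ioo]
    have h1 : ∀ q : T, volume (Set.Ioo (leftLim g (q:ℝ)) (g q)) = νa {(q:ℝ)} := by
      intro q
      have h2 := g.measure_singleton (q:ℝ)
      rw [hdecomp, Measure.add_apply, hμ, zero_add] at h2
      rw [Real.volume_Ioo, ← h2]
    rw [tsum_congr h1,
      ← measure_biUnion hTcount (fun p _ q _ hpq => Set.disjoint_singleton.2 hpq)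
        (fun q _ => measurableSet_singleton q),
      Set.biUnion_of_singleton, hνaT]
  have hgfin : g.measure (Set.Icc 0 x) ≠ ⊤ := by
    rw [g.measure_Icc]; exact ENNReal.ofReal_ne_top
  have hνafin : νa (Set.Icc 0 x) ≠ ⊤ := by
    intro h
    apply hgfin
    rw [hdecomp, Measure.add_apply, h]
    simp
  have hvolIcc : volume (Set.Icc (g 0) (g x)) = g.measure (Set.Icc 0 x) := by
    rw [Real.volume_Icc, g.measure_Icc, h00]
  have hvolC : volume C = μ (Set.Icc 0 x) := by
    rw [hC, measure_diff hUIcc hUmeas.nullMeasurableSet (hvolU ▸ hνafin), hvolIcc, hvolU,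
      hdecomp, Measure.add_apply]
    exact ENNReal.add_sub_cancel_right hνafin
  rw [hvolA, hvolC]
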